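/- (Generalized fiducial Jacobian for multivariate linear regression.) Let A ∈ ℝ^{q×q} be invertible, X_{M·} ∈ ℝ^{|M|×n} of full row rank, Y ∈ ℝ^{q×n}, B ∈ ℝ^{q×|M|}, and set U := A⁻¹(Y − BX_{M·}) ∈ ℝ^{q×n}. Let P := [I_q ⊗ X_{M·}ᵀ | I_q ⊗ Uᵀ] ∈ ℝ^{qn × (q|M| + q²)}, where ⊗ denotes the Kronecker product. Then det(PᵀP) = (det(AAᵀ))^{−q} · (det(X_{M·}X_{M·}ᵀ))^{q} · (det Σ̂_{(M)})^{q}; in particular the Jacobian of the data-generating equation is J = (det(AAᵀ))^{−q/2}(det(X_{M·}X_{M·}ᵀ))^{q/2}(det Σ̂_{(M)})^{q/2}. -/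

import Mathlib

open Matrix
open scoped Kronecker

private lemma det_nonneg_of_posSemidef' {k : ℕ} {M : Matrix (Fin k) (Fin k) ℝ}
    (hM : M.PosSemidef) : 0 ≤ M.det := by
  rw [hM.isHermitian.det_eq_prod_eigenvalues]
  exact Finset.prod_nonneg fun i _ => by simpa using hM.eigenvalues_nonneg i

private lemma posSemidef_mul_transpose' {k l : ℕ} (Z : Matrix (Fin k) (Fin l) ℝ) :
    (Z * Zᵀ).PosSemidef := by
  simpa [Matrix.conjTranspose_eq_transpose_of_trivial] using
    Matrix.posSemidef_self_mul_conjTranspose Z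

private lemma sqrt_prod_pow' (q : ℕ) {a b c : ℝ} (ha : 0 < a) (hb : 0 ≤ b) (hc : 0 ≤ c) :
    Real.sqrt (a⁻¹ ^ q * b ^ q * c ^ q)
      = a ^ (-(q : ℝ) / 2) * b ^ ((q : ℝ) / 2) * c ^ ((q : ℝ) / 2) := by
  have h1 : a⁻¹ ^ q = a ^ (-(q:ℝ)) := by
    rw [Real.rpow_neg ha.le, Real.rpow_natCast, inv_pow]
  have hb' : b ^ q = b ^ ((q:ℝ)) := (Real.rpow_natCast b q).symm
  have hc' : c ^ q = c ^ ((q:ℝ)) := (Real.rpow_natCast c q).symm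
  rw [h1, hb', hc', Real.sqrt_eq_rpow,
      Real.mul_rpow (by positivity) (by positivity),
      Real.mul_rpow (by positivity) (by positivity),
      ← Real.rpow_mul ha.le, ← Real.rpow_mul hb, ← Real.rpow_mul hc]
  ring_nf

private lemma one_kron_sub' {q k : ℕ} (M N : Matrix (Fin k) (Fin k) ℝ) :
    (1 : Matrix (Fin q) (Fin q) ℝ) ⊗ₖ (M - N) = 1 ⊗ₖ M - 1 ⊗ₖ N := by
  ext i j
  simp [Matrix.sub_apply, mul_sub]

/-- the generalized fiducial Jacobian for multivariate linear regression.
With `U := A⁻¹(Y − B X_{M·})` and `P := [I_q ⊗ X_{M·}ᵀ | I_q ⊗ Uᵀ]`,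
`det(PᵀP) = det(AAᵀ)^{−q} det(X_{M·}X_{M·}ᵀ)^q det(Σ̂_{(M)})^q`, and the Jacobian
`J = √(det PᵀP) = det(AAᵀ)^{−q/2} det(X_{M·}X_{M·}ᵀ)^{q/2} det(Σ̂_{(M)})^{q/2}`. -/
theorem statement10 {q n m : ℕ} (A : Matrix (Fin q) (Fin q) ℝ) (hA : IsUnit A.det)
    (XM : Matrix (Fin m) (Fin n) ℝ) (hX : IsUnit (XM * XMᵀ).det)
    (Y : Matrix (Fin q) (Fin n) ℝ) (B : Matrix (Fin q) (Fin m) ℝ) :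
    ∀ (U : Matrix (Fin q) (Fin n) ℝ), U = A⁻¹ * (Y - B * XM) →
    ∀ (P : Matrix (Fin q × Fin n) ((Fin q × Fin m) ⊕ (Fin q × Fin q)) ℝ),
      P = Matrix.fromCols ((1 : Matrix (Fin q) (Fin q) ℝ) ⊗ₖ XMᵀ)
            ((1 : Matrix (Fin q) (Fin q) ℝ) ⊗ₖ Uᵀ) →
      (Pᵀ * P).det
          = ((A * Aᵀ).det)⁻¹ ^ q * ((XM * XMᵀ).det) ^ q *
            ((Y * ((1 : Matrix (Fin n) (Fin n) ℝ) - XMᵀ * (XM * XMᵀ)⁻¹ * XM) * Yᵀ).det) ^ q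
        ∧
      Real.sqrt ((Pᵀ * P).det)
          = ((A * Aᵀ).det) ^ (-(q : ℝ) / 2) * ((XM * XMᵀ).det) ^ ((q : ℝ) / 2) *
            ((Y * ((1 : Matrix (Fin n) (Fin n) ℝ) - XMᵀ * (XM * XMᵀ)⁻¹ * XM) * Yᵀ).det) ^
              ((q : ℝ) / 2) := by
  intro U hU P hP
  set G := (XM * XMᵀ)⁻¹ with hG
  set IH := (1 : Matrix (Fin n) (Fin n) ℝ) - XMᵀ * G * XM with hIH
  set S := Y * IH * Yᵀ with hS
  have hXXt : XM * XMᵀ * G = 1 := Matrix.mul_nonsing_inv _ hX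
  have hGt : Gᵀ = G := by
    rw [hG, Matrix.transpose_nonsing_inv, Matrix.transpose_mul, Matrix.transpose_transpose]
  have hIHt : IHᵀ = IH := by
    rw [hIH]
    simp [Matrix.transpose_sub, Matrix.transpose_mul, hGt, Matrix.mul_assoc]
  have hXIH : XM * IH = 0 := by
    rw [hIH, Matrix.mul_sub, Matrix.mul_one,
      show XM * (XMᵀ * G * XM) = XM * XMᵀ * G * XM by simp [Matrix.mul_assoc],
      hXXt, Matrix.one_mul, sub_self]
  have hIHX : IH * XMᵀ = 0 := by
    have h := congrArg Matrix.transpose hXIH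
    rwa [Matrix.transpose_mul, hIHt, Matrix.transpose_zero] at h
  have hIHidem : IH * IH = IH := by
    have h0 : IH * IH = IH - IH * XMᵀ * (G * XM) := by
      nth_rewrite 2 [hIH]
      rw [Matrix.mul_sub, Matrix.mul_one]
      simp [Matrix.mul_assoc]
    rw [h0, hIHX, Matrix.zero_mul, sub_zero]
  have hYIH : (Y * IH) * (Y * IH)ᵀ = S := by
    rw [Matrix.transpose_mul, hIHt,
      show Y * IH * (IH * Yᵀ) = Y * (IH * IH) * Yᵀ by simp [Matrix.mul_assoc],
      hIHidem, hS]
  have hSpsd : S.PosSemidef := by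
    rw [← hYIH]; exact posSemidef_mul_transpose' _
  have hUIH : U * IH = A⁻¹ * (Y * IH) := by
    rw [hU, Matrix.mul_assoc, Matrix.sub_mul, Matrix.mul_assoc, hXIH, Matrix.mul_zero, sub_zero]
  have hUS : U * IH * Uᵀ = A⁻¹ * S * (A⁻¹)ᵀ := by
    have h2 : U * IH * Uᵀ = (U * IH) * (U * IH)ᵀ := by
      rw [Matrix.transpose_mul, hIHt,
        show U * IH * (IH * Uᵀ) = U * (IH * IH) * Uᵀ by simp [Matrix.mul_assoc], hIHidem]
    rw [h2, hUIH, ← hYIH, Matrix.transpose_mul]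
    simp [Matrix.mul_assoc]
  -- compute PᵀP
  have hPt : Pᵀ = Matrix.fromRows ((1 : Matrix (Fin q) (Fin q) ℝ) ⊗ₖ XM)
      ((1 : Matrix (Fin q) (Fin q) ℝ) ⊗ₖ U) := by
    rw [hP, Matrix.transpose_fromCols, ← Matrix.kroneckerMap_transpose,
      ← Matrix.kroneckerMap_transpose, Matrix.transpose_one, Matrix.transpose_transpose,
      Matrix.transpose_transpose]
  have hPP : Pᵀ * P = Matrix.fromBlocks
      ((1 : Matrix (Fin q) (Fin q) ℝ) ⊗ₖ (XM * XMᵀ)) (1 ⊗ₖ (XM * Uᵀ))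
      (1 ⊗ₖ (U * XMᵀ)) (1 ⊗ₖ (U * Uᵀ)) := by
    rw [hPt, hP, Matrix.fromRows_mul_fromCols]
    simp only [← Matrix.mul_kronecker_mul, Matrix.one_mul]
  have hdetK : ((1 : Matrix (Fin q) (Fin q) ℝ) ⊗ₖ (XM * XMᵀ)).det = (XM * XMᵀ).det ^ q := by
    rw [Matrix.det_kronecker, Matrix.det_one, one_pow, one_mul, Fintype.card_fin]
  have hinvK : IsUnit ((1 : Matrix (Fin q) (Fin q) ℝ) ⊗ₖ (XM * XMᵀ)).det := by
    rw [hdetK]; exact hX.pow _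
  haveI := Matrix.invertibleOfIsUnitDet _ hinvK
  have hschur : U * Uᵀ - U * XMᵀ * G * (XM * Uᵀ) = U * IH * Uᵀ := by
    rw [hIH, Matrix.mul_sub, Matrix.sub_mul, Matrix.mul_one]
    simp [Matrix.mul_assoc]
  have hdetS : (A⁻¹ * S * (A⁻¹)ᵀ).det = ((A * Aᵀ).det)⁻¹ * S.det := by
    rw [Matrix.det_mul, Matrix.det_mul, Matrix.det_transpose, Matrix.det_nonsing_inv,
      Ring.inverse_eq_inv', Matrix.det_mul, Matrix.det_transpose, mul_inv]
    ring
  have h1 : (Pᵀ * P).det = ((A * Aᵀ).det)⁻¹ ^ q * ((XM * XMᵀ).det) ^ q * S.det ^ q := by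
    rw [hPP, Matrix.det_fromBlocks₁₁, hdetK, Matrix.invOf_eq_nonsing_inv,
      Matrix.inv_kronecker, inv_one, ← hG]
    simp only [← Matrix.mul_kronecker_mul, Matrix.one_mul, Matrix.mul_one]
    rw [← one_kron_sub', hschur, hUS, Matrix.det_kronecker, Matrix.det_one, one_pow, one_mul,
      Fintype.card_fin, hdetS, mul_pow]
    ring
  refine ⟨h1, ?_⟩
  have hane : A.det ≠ 0 := hA.ne_zero
  have ha : 0 < (A * Aᵀ).det := by
    rw [Matrix.det_mul, Matrix.det_transpose]
    exact mul_self_pos.2 hane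
  have hbnn : 0 ≤ (XM * XMᵀ).det := det_nonneg_of_posSemidef' (posSemidef_mul_transpose' XM)
  have hc : 0 ≤ S.det := det_nonneg_of_posSemidef' hSpsd
  rw [h1]
  exact sqrt_prod_pow' q ha hbnn hc
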